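/- Suppose w : [0,T) → ℝ is C¹, K ≥ 0, w satisfies w'(t) ≤ -½ w(t)² + ½ K² on [0,T), and w(0) < -K. Then T is finite; in fact, setting δ = ½ - ½ √(K/(-w(0))), one has T ≤ -1/(δ w(0)). -/

import Mathlib

set_option maxHeartbeats 1000000 in
theorem blowup_time_bound_of_quadratic_riccati
    (T K : ℝ) (hT : 0 < T) (hK : 0 ≤ K)
    (w w' : ℝ → ℝ)
    (hderiv : ∀ t ∈ Set.Ico (0:ℝ) T, HasDerivAt w (w' t) t)
    (hcont : ContinuousOn w' (Set.Ico (0:ℝ) T))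
    (hineq : ∀ t ∈ Set.Ico (0:ℝ) T, w' t ≤ -(1/2) * (w t) ^ 2 + (1/2) * K ^ 2)
    (h0 : w 0 < -K) :
    T ≤ -1 / ((1/2 - (1/2) * Real.sqrt (K / (-(w 0)))) * w 0) := by
  set δ : ℝ := 1/2 - (1/2) * Real.sqrt (K / (-(w 0))) with hδdef
  have hw0 : w 0 < 0 := lt_of_lt_of_le h0 (by linarith)
  have ha : (0:ℝ) < -(w 0) := by linarith
  have hr0 : 0 ≤ K / (-(w 0)) := div_nonneg hK ha.le
  have hr1 : K / (-(w 0)) < 1 := (div_lt_one ha).2 (by linarith)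
  have hs1 : Real.sqrt (K / (-(w 0))) < 1 := by
    have := Real.sqrt_lt_sqrt hr0 hr1
    simpa using this
  have hδpos : 0 < δ := by rw [hδdef]; nlinarith
  -- Step 1: w t ≤ w 0 on [0, T)
  have hA : ∀ t ∈ Set.Ico (0:ℝ) T, w t ≤ w 0 := by
    intro t1 ht1
    by_contra hgt
    push_neg at hgt
    have ht1pos : 0 < t1 := by
      rcases lt_or_eq_of_le ht1.1 with h | h
      · exact h
      · exfalso; rw [← h] at hgt; exact lt_irrefl _ hgt
    have hsub : Set.Icc (0:ℝ) t1 ⊆ Set.Ico 0 T :=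
      fun s hs => ⟨hs.1, lt_of_le_of_lt hs.2 ht1.2⟩
    have hwc : ContinuousOn w (Set.Icc 0 t1) :=
      fun s hs => ((hderiv s (hsub hs)).continuousAt).continuousWithinAt
    have hSclosed : IsClosed (Set.Icc (0:ℝ) t1 ∩ w ⁻¹' Set.Iic (w 0)) :=
      hwc.preimage_isClosed_of_isClosed isClosed_Icc isClosed_Iic
    set S : Set ℝ := Set.Icc (0:ℝ) t1 ∩ w ⁻¹' Set.Iic (w 0) with hS
    have h0S : (0:ℝ) ∈ S := ⟨⟨le_refl 0, ht1pos.le⟩, show w 0 ≤ w 0 from le_rfl⟩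
    have hSne : S.Nonempty := ⟨0, h0S⟩
    have hSbdd : BddAbove S := ⟨t1, fun s hs => hs.1.2⟩
    set t0 : ℝ := sSup S with ht0def
    have ht0S : t0 ∈ S := hSclosed.csSup_mem hSne hSbdd
    have hwt0 : w t0 ≤ w 0 := ht0S.2
    have ht0mem : t0 ∈ Set.Icc (0:ℝ) t1 := ht0S.1
    have ht0lt : t0 < t1 := by
      rcases lt_or_eq_of_le ht0mem.2 with h | h
      · exact h
      · exfalso; rw [h] at hwt0; linarith
    have hIoc : ∀ s ∈ Set.Ioc t0 t1, w 0 < w s := by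
      intro s hs
      by_contra hle
      push_neg at hle
      have hsS : s ∈ S := ⟨⟨le_trans ht0mem.1 hs.1.le, hs.2⟩, hle⟩
      exact absurd (le_csSup hSbdd hsS) (not_le.2 hs.1)
    -- derivative at t0 is nonneg
    have hd := hderiv t0 (hsub ht0mem)
    rw [hasDerivAt_iff_tendsto_slope] at hd
    have hd' : Filter.Tendsto (slope w t0) (nhdsWithin t0 (Set.Ioi t0)) (nhds (w' t0)) :=
      hd.mono_left (nhdsWithin_mono t0 (fun x hx => ne_of_gt hx))
    have hev : ∀ᶠ s in nhdsWithin t0 (Set.Ioi t0), 0 ≤ slope w t0 s := by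
      filter_upwards [Ioc_mem_nhdsGT_of_mem ⟨le_refl t0, ht0lt⟩] with s hs
      have h1 : w t0 ≤ w s := le_of_lt (lt_of_le_of_lt hwt0 (hIoc s hs))
      have h2 : 0 < s - t0 := sub_pos.2 hs.1
      rw [slope_def_field]
      have : (0:ℝ) ≤ w s - w t0 := by linarith
      rw [div_eq_mul_inv]
      · exact mul_nonneg (by linarith) (inv_nonneg.2 h2.le)
    have hnonneg : 0 ≤ w' t0 := ge_of_tendsto hd' hev
    have hub := hineq t0 (hsub ht0mem)
    nlinarith [mul_pos (show 0 < -(w t0 + K) by linarith)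
      (show 0 < -(w t0 - K) by linarith)]
  have hwneg : ∀ t ∈ Set.Ico (0:ℝ) T, w t < 0 :=
    fun t ht => lt_of_le_of_lt (hA t ht) hw0
  -- Step 2: key algebraic bound  K^2 ≤ sqrt(K/(-w0)) * (w 0)^2
  have key : K ^ 2 ≤ Real.sqrt (K / (-(w 0))) * (w 0) ^ 2 := by
    have e1 : Real.sqrt (K / (-(w 0))) = Real.sqrt K / Real.sqrt (-(w 0)) :=
      Real.sqrt_div hK (-(w 0))
    have hsa : 0 < Real.sqrt (-(w 0)) := Real.sqrt_pos.2 ha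
    have hsK : 0 ≤ Real.sqrt K := Real.sqrt_nonneg K
    have hle : Real.sqrt K ≤ Real.sqrt (-(w 0)) := Real.sqrt_le_sqrt (by linarith)
    have eK : Real.sqrt K ^ 2 = K := Real.sq_sqrt hK
    have ea : Real.sqrt (-(w 0)) ^ 2 = -(w 0) := Real.sq_sqrt ha.le
    have eW : (w 0) ^ 2 = Real.sqrt (-(w 0)) ^ 4 := by
      rw [show Real.sqrt (-(w 0)) ^ 4 = (Real.sqrt (-(w 0)) ^ 2) ^ 2 by ring, ea]; ring
    have eK2 : K ^ 2 = Real.sqrt K ^ 4 := by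
      rw [show Real.sqrt K ^ 4 = (Real.sqrt K ^ 2) ^ 2 by ring, eK]
    rw [e1, div_mul_eq_mul_div, le_div_iff₀ hsa, eW, eK2]
    nlinarith [mul_nonneg (mul_nonneg hsK hsa.le)
      (sub_nonneg.2 (pow_le_pow_left₀ hsK hle 3))]
  -- Step 3: w' t ≤ -δ * (w t)^2
  have hB : ∀ t ∈ Set.Ico (0:ℝ) T, w' t ≤ -δ * (w t) ^ 2 := by
    intro t ht
    have h1 := hineq t ht
    have h2 := hA t ht
    have hsq : (w 0) ^ 2 ≤ (w t) ^ 2 := by nlinarith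
    have hs0 : 0 ≤ Real.sqrt (K / (-(w 0))) := Real.sqrt_nonneg _
    rw [hδdef]
    nlinarith [mul_le_mul_of_nonneg_left hsq hs0]
  -- Step 4: u = -(w)⁻¹ + δ t is antitone on [0,T)
  set f : ℝ → ℝ := fun t => -(w t)⁻¹ + δ * t with hf
  have hdf : ∀ t ∈ Set.Ico (0:ℝ) T, HasDerivAt f (w' t / (w t) ^ 2 + δ) t := by
    intro t ht
    have hne : w t ≠ 0 := ne_of_lt (hwneg t ht)
    have h1 : HasDerivAt (fun s => -(w s)⁻¹) (w' t / (w t) ^ 2) t := by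
      have := ((hderiv t ht).inv hne).neg
      convert this using 1
      all_goals first | rfl | ring | (funext s; simp)
    have h2 : HasDerivAt (fun s => δ * s) δ t := by
      simpa using (hasDerivAt_id t).const_mul δ
    exact h1.add h2
  have hanti : AntitoneOn f (Set.Ico 0 T) := by
    apply antitoneOn_of_deriv_nonpos (convex_Ico 0 T)
    · exact fun t ht => ((hdf t ht).continuousAt).continuousWithinAt
    · intro x hx
      rw [interior_Ico] at hx
      exact (hdf x (Set.Ioo_subset_Ico_self hx)).differentiableAt.differentiableWithinAt
    · intro x hx
      rw [interior_Ico] at hx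
      have hx' : x ∈ Set.Ico (0:ℝ) T := Set.Ioo_subset_Ico_self hx
      rw [(hdf x hx').deriv]
      have hb := hB x hx'
      have hsqpos : 0 < (w x) ^ 2 := by have := hwneg x hx'; nlinarith
      have hdd : w' x / (w x) ^ 2 ≤ -δ := by
        rw [div_le_iff₀ hsqpos]
        nlinarith
      linarith
  -- Step 5: conclude
  have hbound : ∀ t ∈ Set.Ico (0:ℝ) T, t ≤ -1 / (δ * w 0) := by
    intro t ht
    have h1 : f t ≤ f 0 := hanti (Set.left_mem_Ico.2 hT) ht ht.1
    have h2 : 0 < -(w t)⁻¹ := by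
      rw [neg_pos]
      exact inv_neg''.2 (hwneg t ht)
    have h3 : 0 < -(w 0)⁻¹ := by
      rw [neg_pos]
      exact inv_neg''.2 hw0
    simp only [hf] at h1
    have h4 : δ * t < -(w 0)⁻¹ := by linarith
    have hpos : 0 < -(δ * w 0) := by nlinarith
    have h5 : t * (-(δ * w 0)) < 1 := by
      have e : t * (-(δ * w 0)) = -(w 0) * (δ * t) := by ring
      rw [e]
      calc -(w 0) * (δ * t) < -(w 0) * (-(w 0)⁻¹) := by
            exact mul_lt_mul_of_pos_left h4 ha
        _ = 1 := by rw [neg_mul_neg]; exact mul_inv_cancel₀ (ne_of_lt hw0)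
    rw [show -1 / (δ * w 0) = 1 / (-(δ * w 0)) by rw [div_neg, neg_div], le_div_iff₀ hpos]
    linarith
  by_contra hc
  push_neg at hc
  have hTstarpos : 0 < -1 / (δ * w 0) := by
    apply div_pos_of_neg_of_neg
    · norm_num
    · exact mul_neg_of_pos_of_neg hδpos hw0
  obtain ⟨t, ht1, ht2⟩ := exists_between hc
  have := hbound t ⟨(hTstarpos.trans ht1).le, ht2⟩
  linarith
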